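/- arXiv:1704.00356 — 5 statements merged into one kernel-verified Lean document; each statement's English description precedes it below -/
import Mathlib

section
/- For every approval-based multi-winner election and every PJR-Exact run of that election (i.e., every sequence of choices of winners and of fraction removals satisfying the three defining conditions of the PJR-Exact family), the resulting winning committee W = {w_1, …, w_k} provides proportional justified representation (PJR). -/
open Finset

variable {C : Type*} [Fintype C] [DecidableEq C]

/-- The voters approving candidate `c`. -/
def approvers {n : ℕ} (A : Fin n → Finset C) (c : C) : Finset (Fin n) :=
  Finset.univ.filter (fun i => c ∈ A i)

/-- The exact quota `q = n / k`. -/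
def quota (n k : ℕ) : ℚ := (n : ℚ) / (k : ℚ)

/-- Remaining support of candidate `c` under vote fractions `f`. -/
def supp {n : ℕ} (A : Fin n → Finset C) (f : Fin n → ℚ) (c : C) : ℚ :=
  ∑ i ∈ approvers A c, f i

/-- The set `W_j = {w_1, …, w_j}` of the first `j` winners. -/
def Wset (w : ℕ → C) (j : ℕ) : Finset C := (Finset.Icc 1 j).image w

/-- The candidates approved by every voter in `Ns`, i.e. `⋂_{i ∈ Ns} A i`. -/
def commonApproved {n : ℕ} (A : Fin n → Finset C) (Ns : Finset (Fin n)) : Finset C :=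
  Finset.univ.filter (fun c => ∀ i ∈ Ns, c ∈ A i)

/-- `Ns` is an `ℓ`-cohesive group of voters: `|Ns| ≥ ℓ·n/k` and `|⋂_{i ∈ Ns} A i| ≥ ℓ`. -/
def Cohesive {n : ℕ} (A : Fin n → Finset C) (k ℓ : ℕ) (Ns : Finset (Fin n)) : Prop :=
  (ℓ : ℚ) * (n : ℚ) / (k : ℚ) ≤ (Ns.card : ℚ) ∧ ℓ ≤ (commonApproved A Ns).card

/-- `W` provides proportional justified representation for `(A, k)`. -/
def ProvidesPJR {n : ℕ} (A : Fin n → Finset C) (k : ℕ) (W : Finset C) : Prop :=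
  ∀ ℓ : ℕ, 1 ≤ ℓ → ℓ ≤ k → ∀ Ns : Finset (Fin n), Cohesive A k ℓ Ns →
    ℓ ≤ (W ∩ Ns.biUnion A).card

/-- `W` provides extended justified representation for `(A, k)`. -/
def ProvidesEJR {n : ℕ} (A : Fin n → Finset C) (k : ℕ) (W : Finset C) : Prop :=
  ∀ ℓ : ℕ, 1 ≤ ℓ → ℓ ≤ k → ∀ Ns : Finset (Fin n), Cohesive A k ℓ Ns →
    ∃ i ∈ Ns, ℓ ≤ (A i ∩ W).card

/-- The set of `ℓ`'s satisfying the dissatisfaction-level fixpoint equation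
`ℓ = ⌊(k/n)·|{i : c ∈ A_i ∧ |A_i ∩ W| < ℓ}|⌋`
(natural-number division `k * m / n` is exactly the floor `⌊(k/n)·m⌋`). -/
def dissatSet {n : ℕ} (A : Fin n → Finset C) (k : ℕ) (W : Finset C) (c : C) : Set ℕ :=
  {ℓ : ℕ | ℓ = k * (Finset.univ.filter (fun i => c ∈ A i ∧ (A i ∩ W).card < ℓ)).card / n}

/-- The dissatisfaction level `ℓ(c, W)`: the largest non-negative integer satisfying
the fixpoint equation. -/
noncomputable def dissat {n : ℕ} (A : Fin n → Finset C) (k : ℕ) (W : Finset C) (c : C) : ℕ :=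
  sSup (dissatSet A k W c)

/-- `ℓ_W(i, c) = max_{c' ∈ A_i \ (W ∪ {c})} ℓ(c', W)` (with `max ∅ = 0`). -/
noncomputable def dissatVoter {n : ℕ} (A : Fin n → Finset C) (k : ℕ) (W : Finset C)
    (i : Fin n) (c : C) : ℕ :=
  (A i \ insert c W).sup (dissat A k W)

/-- `ℓ_W(i) = max_{c ∈ A_i \ W} ℓ(c, W)` (with `max ∅ = 0`). -/
noncomputable def dissatVoterAll {n : ℕ} (A : Fin n → Finset C) (k : ℕ) (W : Finset C)
    (i : Fin n) : ℕ :=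
  (A i \ W).sup (dissat A k W)

/-- `g_i(c)` relative to the committee `W`. -/
noncomputable def gfun {n : ℕ} (A : Fin n → Finset C) (k : ℕ) (W : Finset C)
    (i : Fin n) (c : C) : ℚ :=
  if dissatVoter A k W i c ≤ (A i ∩ W).card then 0
  else ((dissatVoter A k W i c : ℚ) - ((A i ∩ W).card : ℚ) - 1) / (dissatVoter A k W i c : ℚ)

/-- Candidate `c ∉ W` is in a normal state (w.r.t. committee `W` and fractions `f`). -/
def NormalState {n : ℕ} (A : Fin n → Finset C) (k : ℕ) (f : Fin n → ℚ) (W : Finset C)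
    (c : C) : Prop :=
  (∀ i : Fin n, c ∈ A i → (A i ∩ W).card < dissatVoter A k W i c →
      ((dissatVoter A k W i c : ℚ) - ((A i ∩ W).card : ℚ)) / (dissatVoter A k W i c : ℚ) ≤ f i) ∧
  quota n k ≤ ∑ i ∈ approvers A c, (f i - gfun A k W i c)

/-- Candidate `c ∉ W` is in a starving state. -/
def StarvingState {n : ℕ} (A : Fin n → Finset C) (k : ℕ) (f : Fin n → ℚ) (W : Finset C)
    (c : C) : Prop :=
  ∃ i : Fin n, c ∈ A i ∧ (A i ∩ W).card < dissatVoter A k W i c ∧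
    f i < ((dissatVoter A k W i c : ℚ) - ((A i ∩ W).card : ℚ)) / (dissatVoter A k W i c : ℚ)

/-- Candidate `c ∉ W` is in an eager state. -/
def EagerState {n : ℕ} (A : Fin n → Finset C) (k : ℕ) (f : Fin n → ℚ) (W : Finset C)
    (c : C) : Prop :=
  ¬ StarvingState A k f W c ∧ quota n k ≤ supp A f c ∧
    ∑ i ∈ approvers A c, (f i - gfun A k W i c) < quota n k

/-- A run of a voting rule in the PJR-Exact family: a sequence of distinct winners
`w 1, …, w k` together with fraction functions `f 0, …, f k` satisfying the three
defining conditions of the family. -/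
structure PJRExactRun (n k : ℕ) (A : Fin n → Finset C) where
  w : ℕ → C
  f : ℕ → Fin n → ℚ
  /-- the selected candidates are pairwise distinct -/
  w_inj : ∀ j j' : ℕ, 1 ≤ j → j ≤ k → 1 ≤ j' → j' ≤ k → w j = w j' → j = j'
  /-- initially each voter has her whole vote -/
  f_zero : ∀ i, f 0 i = 1
  /-- fractions stay non-negative -/
  f_nonneg : ∀ j, 1 ≤ j → j ≤ k → ∀ i, 0 ≤ f j i
  /-- fractions never increase -/
  f_mono : ∀ j, 1 ≤ j → j ≤ k → ∀ i, f j i ≤ f (j - 1) i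
  /-- if the remaining support of the winner exceeds the quota, exactly `q` votes are removed -/
  remove_big : ∀ j, 1 ≤ j → j ≤ k → quota n k < supp A (f (j - 1)) (w j) →
    ∑ i ∈ approvers A (w j), (f (j - 1) i - f j i) = quota n k
  /-- if the remaining support of the winner is at most the quota, all of it is removed -/
  remove_small : ∀ j, 1 ≤ j → j ≤ k → supp A (f (j - 1)) (w j) ≤ quota n k →
    ∀ i, w j ∈ A i → f j i = 0
  /-- voters not approving the winner keep their fractions -/
  f_untouched : ∀ j, 1 ≤ j → j ≤ k → ∀ i, w j ∉ A i → f j i = f (j - 1) i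
  /-- if some unelected candidate has remaining support at least `q`,
  then so has the selected one -/
  greedy : ∀ j, 1 ≤ j → j ≤ k →
    (∃ c, c ∉ Wset w (j - 1) ∧ quota n k ≤ supp A (f (j - 1)) c) →
    quota n k ≤ supp A (f (j - 1)) (w j)

/-- Iteration `j` of a PJR-Exact run is normal. -/
def NormalIteration {n k : ℕ} {A : Fin n → Finset C} (R : PJRExactRun n k A) (j : ℕ) : Prop :=
  NormalState A k (R.f (j - 1)) (Wset R.w (j - 1)) (R.w j) ∧
  ∀ i : Fin n, R.w j ∈ A i →
    (A i ∩ Wset R.w (j - 1)).card < dissatVoter A k (Wset R.w (j - 1)) i (R.w j) →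
    ((dissatVoter A k (Wset R.w (j - 1)) i (R.w j) : ℚ) - ((A i ∩ Wset R.w j).card : ℚ)) /
      (dissatVoter A k (Wset R.w (j - 1)) i (R.w j) : ℚ) ≤ R.f j i

/-- every PJR-Exact run produces a committee that provides PJR. -/
theorem pjrExact_satisfies_PJR {C : Type*} [Fintype C] [DecidableEq C] {n k : ℕ}
    (hn : 0 < n) (hk : 1 ≤ k) (hkC : k ≤ Fintype.card C)
    (A : Fin n → Finset C) (R : PJRExactRun n k A) :
    ProvidesPJR A k (Wset R.w k) := by
  intro ℓ hℓ1 hℓk Ns hcoh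
  by_contra hlt
  push_neg at hlt
  have hk0 : (0:ℚ) < k := by exact_mod_cast hk
  have hn0 : (0:ℚ) < n := by exact_mod_cast hn
  have hq : (0:ℚ) < quota n k := div_pos hn0 hk0
  obtain ⟨hcoh1, hcoh2⟩ := hcoh
  have hℓ0 : (0:ℚ) < ℓ := by exact_mod_cast hℓ1
  -- Ns is nonempty
  have hNsne : Ns.Nonempty := by
    rw [← Finset.card_pos]
    have : (0:ℚ) < (Ns.card : ℚ) :=
      lt_of_lt_of_le (div_pos (mul_pos hℓ0 hn0) hk0) hcoh1
    exact_mod_cast this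
  -- a common candidate outside the committee
  obtain ⟨cs, hcsCA, hcsW⟩ : ∃ c ∈ commonApproved A Ns, c ∉ Wset R.w k := by
    by_contra h
    push_neg at h
    have hsub : commonApproved A Ns ⊆ Wset R.w k ∩ Ns.biUnion A := by
      intro c hc
      rw [Finset.mem_inter]
      refine ⟨h c hc, ?_⟩
      obtain ⟨i0, hi0⟩ := hNsne
      exact Finset.mem_biUnion.mpr ⟨i0, hi0, (Finset.mem_filter.mp hc).2 i0 hi0⟩
    exact absurd (le_trans hcoh2 (Finset.card_le_card hsub)) (not_le.mpr hlt)
  -- the set of iterations whose winner touches the group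
  set T := (Finset.Icc 1 k).filter (fun j => R.w j ∈ Ns.biUnion A) with hT
  have hTcard : T.card < ℓ := by
    have hinj : Set.InjOn R.w T := by
      intro a ha b hb hab
      simp only [hT, Finset.coe_filter, Set.mem_setOf_eq, Finset.mem_Icc] at ha hb
      exact R.w_inj a b ha.1.1 ha.1.2 hb.1.1 hb.1.2 hab
    have himg : T.image R.w ⊆ Wset R.w k ∩ Ns.biUnion A := by
      intro c hc
      simp only [Finset.mem_image] at hc
      obtain ⟨j, hj, rfl⟩ := hc
      simp only [hT, Finset.mem_filter, Finset.mem_Icc] at hj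
      refine Finset.mem_inter.mpr ⟨?_, hj.2⟩
      exact Finset.mem_image.mpr ⟨j, Finset.mem_Icc.mpr hj.1, rfl⟩
    calc T.card = (T.image R.w).card := (Finset.card_image_of_injOn hinj).symm
      _ ≤ (Wset R.w k ∩ Ns.biUnion A).card := Finset.card_le_card himg
      _ < ℓ := hlt
  -- unconditional per-step facts
  have hstep_eq : ∀ j, 1 ≤ j → j ≤ k →
      ∑ i, (R.f (j-1) i - R.f j i) = ∑ i ∈ approvers A (R.w j), (R.f (j-1) i - R.f j i) := by
    intro j h1 h2
    refine (Finset.sum_subset (Finset.subset_univ _) ?_).symm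
    intro i _ hi
    have hnot : R.w j ∉ A i := by simpa [approvers] using hi
    rw [R.f_untouched j h1 h2 i hnot, sub_self]
  have hstep_le : ∀ j, 1 ≤ j → j ≤ k → ∑ i, (R.f (j-1) i - R.f j i) ≤ quota n k := by
    intro j h1 h2
    rw [hstep_eq j h1 h2]
    rcases le_or_gt (supp A (R.f (j-1)) (R.w j)) (quota n k) with h | h
    · have heq : ∑ i ∈ approvers A (R.w j), (R.f (j-1) i - R.f j i)
          = ∑ i ∈ approvers A (R.w j), R.f (j-1) i := by
        refine Finset.sum_congr rfl fun i hi => ?_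
        rw [R.remove_small j h1 h2 h i (by simpa [approvers] using hi), sub_zero]
      rw [heq]
      simpa [supp] using h
    · exact le_of_eq (R.remove_big j h1 h2 h)
  have fnn : ∀ j, j ≤ k → ∀ i, 0 ≤ R.f j i := by
    intro j hj i
    rcases Nat.eq_zero_or_pos j with rfl | h
    · rw [R.f_zero]; norm_num
    · exact R.f_nonneg j h hj i
  -- key invariant
  have key : ∀ j, j ≤ k →
      (Ns.card : ℚ) - ((T ∩ Finset.Icc 1 j).card : ℚ) * quota n k ≤ ∑ i ∈ Ns, R.f j i := by
    intro j
    induction j with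
    | zero =>
      intro _
      have : ((T ∩ Finset.Icc 1 0).card : ℚ) = 0 := by simp
      rw [this]
      simp [R.f_zero]
    | succ j ih =>
      intro hjk
      have hj : j ≤ k := Nat.le_of_succ_le hjk
      have h1 : 1 ≤ j + 1 := Nat.succ_le_succ (Nat.zero_le j)
      have hmono : ∀ i, R.f (j+1) i ≤ R.f j i := by
        intro i
        simpa using R.f_mono (j+1) h1 hjk i
      have hsum : ∑ i ∈ Ns, (R.f j i - R.f (j+1) i)
          = ∑ i ∈ Ns, R.f j i - ∑ i ∈ Ns, R.f (j+1) i := Finset.sum_sub_distrib _ _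
      by_cases hw : R.w (j+1) ∈ Ns.biUnion A
      · have hrem : ∑ i ∈ Ns, (R.f j i - R.f (j+1) i) ≤ quota n k := by
          calc ∑ i ∈ Ns, (R.f j i - R.f (j+1) i)
              ≤ ∑ i, (R.f j i - R.f (j+1) i) := by
                refine Finset.sum_le_sum_of_subset_of_nonneg (Finset.subset_univ _) ?_
                intro i _ _
                exact sub_nonneg.mpr (hmono i)
            _ ≤ quota n k := by simpa using hstep_le (j+1) h1 hjk
        have hmem : j + 1 ∈ T := by
          simp only [hT, Finset.mem_filter, Finset.mem_Icc]
          exact ⟨⟨h1, hjk⟩, hw⟩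
        have hins : T ∩ Finset.Icc 1 (j+1) = insert (j+1) (T ∩ Finset.Icc 1 j) := by
          ext x
          simp only [Finset.mem_inter, Finset.mem_insert, Finset.mem_Icc]
          constructor
          · rintro ⟨hx, hx1, hx2⟩
            rcases Nat.lt_or_ge x (j+1) with h' | h'
            · exact Or.inr ⟨hx, hx1, Nat.lt_succ_iff.mp h'⟩
            · exact Or.inl (le_antisymm hx2 h')
          · rintro (rfl | ⟨hx, hx1, hx2⟩)
            · exact ⟨hmem, h1, le_rfl⟩
            · exact ⟨hx, hx1, Nat.le_succ_of_le hx2⟩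
        have hnotmem : j + 1 ∉ T ∩ Finset.Icc 1 j := by
          simp [Finset.mem_Icc]
        have hcard : ((T ∩ Finset.Icc 1 (j+1)).card : ℚ)
            = ((T ∩ Finset.Icc 1 j).card : ℚ) + 1 := by
          rw [hins, Finset.card_insert_of_notMem hnotmem]
          push_cast
          ring
        have hih := ih hj
        rw [hcard]
        linarith [hsum ▸ hrem]
      · have heq : ∑ i ∈ Ns, R.f (j+1) i = ∑ i ∈ Ns, R.f j i := by
          refine Finset.sum_congr rfl fun i hi => ?_
          have hnot : R.w (j+1) ∉ A i := fun h => hw (Finset.mem_biUnion.mpr ⟨i, hi, h⟩)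
          simpa using R.f_untouched (j+1) h1 hjk i hnot
        have hsubc : (T ∩ Finset.Icc 1 j).card ≤ (T ∩ Finset.Icc 1 (j+1)).card :=
          Finset.card_le_card
            (Finset.inter_subset_inter (Finset.Subset.refl T) (Finset.Icc_subset_Icc_right (Nat.le_succ j)))
        have hsubc' : ((T ∩ Finset.Icc 1 j).card : ℚ) ≤ ((T ∩ Finset.Icc 1 (j+1)).card : ℚ) := by
          exact_mod_cast hsubc
        have hmul := mul_le_mul_of_nonneg_right hsubc' hq.le
        have hih := ih hj
        rw [heq]
        linarith
  -- the group keeps at least one quota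
  have keyq : ∀ j, j ≤ k → quota n k ≤ ∑ i ∈ Ns, R.f j i := by
    intro j hj
    refine le_trans ?_ (key j hj)
    have hc1 : (T ∩ Finset.Icc 1 j).card ≤ T.card := Finset.card_le_card Finset.inter_subset_left
    have hc2 : (T ∩ Finset.Icc 1 j).card + 1 ≤ ℓ := Nat.succ_le_of_lt (lt_of_le_of_lt hc1 hTcard)
    have hTc : ((T ∩ Finset.Icc 1 j).card : ℚ) ≤ (ℓ : ℚ) - 1 := by
      have := (Nat.cast_le (α := ℚ)).mpr hc2
      push_cast at this
      linarith
    have hNs : (ℓ:ℚ) * quota n k ≤ (Ns.card : ℚ) := by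
      have : (ℓ:ℚ) * (n:ℚ) / (k:ℚ) = (ℓ:ℚ) * quota n k := by
        unfold quota; ring
      linarith [this ▸ hcoh1]
    nlinarith [mul_le_mul_of_nonneg_right hTc hq.le]
  -- support of cs is always at least the quota
  have hsuppcs : ∀ j, j ≤ k → quota n k ≤ supp A (R.f j) cs := by
    intro j hj
    refine le_trans (keyq j hj) ?_
    unfold supp
    refine Finset.sum_le_sum_of_subset_of_nonneg ?_ fun i _ _ => fnn j hj i
    intro i hi
    simp only [approvers, Finset.mem_filter, Finset.mem_univ, true_and]
    exact (Finset.mem_filter.mp hcsCA).2 i hi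
  have hcsW' : ∀ j, j ≤ k → cs ∉ Wset R.w j := by
    intro j hj hmem
    exact hcsW (Finset.image_subset_image (Finset.Icc_subset_Icc_right hj) hmem)
  -- each step removes exactly one quota
  have hstep_exact : ∀ j, 1 ≤ j → j ≤ k → ∑ i, (R.f (j-1) i - R.f j i) = quota n k := by
    intro j h1 h2
    have hj1 : j - 1 ≤ k := le_trans (Nat.sub_le j 1) h2
    have hg : quota n k ≤ supp A (R.f (j-1)) (R.w j) :=
      R.greedy j h1 h2 ⟨cs, hcsW' (j-1) hj1, hsuppcs (j-1) hj1⟩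
    rw [hstep_eq j h1 h2]
    rcases lt_or_eq_of_le hg with h | h
    · exact R.remove_big j h1 h2 h
    · have hz := R.remove_small j h1 h2 h.ge
      have heq : ∑ i ∈ approvers A (R.w j), (R.f (j-1) i - R.f j i)
          = ∑ i ∈ approvers A (R.w j), R.f (j-1) i := by
        refine Finset.sum_congr rfl fun i hi => ?_
        rw [hz i (by simpa [approvers] using hi), sub_zero]
      rw [heq]
      exact h.symm
  -- total budget computation
  have total : ∀ j, j ≤ k → ∑ i, R.f j i = (n : ℚ) - (j:ℚ) * quota n k := by
    intro j
    induction j with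
    | zero =>
      intro _
      simp [R.f_zero, Finset.card_univ]
    | succ j ih =>
      intro hjk
      have hj := Nat.le_of_succ_le hjk
      have h1 : 1 ≤ j+1 := Nat.succ_le_succ (Nat.zero_le j)
      have hex := hstep_exact (j+1) h1 hjk
      have hred : (j+1) - 1 = j := rfl
      rw [hred, Finset.sum_sub_distrib] at hex
      have hih := ih hj
      push_cast
      linarith
  have hle : ∑ i ∈ Ns, R.f k i ≤ ∑ i, R.f k i :=
    Finset.sum_le_sum_of_subset_of_nonneg (Finset.subset_univ _) fun i _ _ => fnn k le_rfl i
  have h1 := le_trans (keyq k le_rfl) hle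
  rw [total k le_rfl] at h1
  have hkq : (k:ℚ) * quota n k = (n:ℚ) := by
    unfold quota
    field_simp
  linarith
end

section
/- Consider a ballot profile A = (A_1,…,A_n) over a candidate set C and a target committee size k ≤ |C|. If W ⊆ C with |W| = k is such that every candidate c ∈ C \ W has dissatisfaction level ℓ(c, W) = 0, then W provides extended justified representation (EJR). -/
open Finset

variable {C : Type*} [Fintype C] [DecidableEq C]

/-- if every unelected candidate has dissatisfaction level 0,
then the committee provides EJR. -/
theorem dissat_zero_provides_EJR {C : Type*} [Fintype C] [DecidableEq C] {n : ℕ}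
    (hn : 0 < n) (A : Fin n → Finset C) (k : ℕ) (hk : 1 ≤ k) (hkC : k ≤ Fintype.card C)
    (W : Finset C) (hWcard : W.card = k)
    (hzero : ∀ c : C, c ∉ W → dissat A k W c = 0) :
    ProvidesEJR A k W := by
  intro ℓ hℓ1 hℓk Ns hcoh
  by_contra hcon
  push_neg at hcon
  obtain ⟨hsize, hcommon⟩ := hcoh
  have hk0 : (0:ℚ) < k := by exact_mod_cast hk
  have hn0 : (0:ℚ) < n := by exact_mod_cast hn
  have hℓQ : (0:ℚ) < ℓ := by exact_mod_cast hℓ1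
  have hNscard : 0 < Ns.card := by
    have h : (0:ℚ) < Ns.card := lt_of_lt_of_le (by positivity) hsize
    exact_mod_cast h
  obtain ⟨i0, hi0⟩ := Finset.card_pos.mp hNscard
  have hlt : ∀ i ∈ Ns, (A i ∩ W).card < ℓ := fun i hi => hcon i hi
  have hinter : (commonApproved A Ns ∩ W).card < ℓ := by
    refine lt_of_le_of_lt (Finset.card_le_card ?_) (hlt i0 hi0)
    intro x hx
    simp only [Finset.mem_inter, commonApproved, Finset.mem_filter, Finset.mem_univ,
      true_and] at hx ⊢
    exact ⟨hx.1 i0 hi0, hx.2⟩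
  have hdiff : (commonApproved A Ns \ W).Nonempty := by
    rw [← Finset.card_pos]
    have h1 := Finset.card_sdiff_add_card_inter (commonApproved A Ns) W
    omega
  obtain ⟨c, hc⟩ := hdiff
  rw [Finset.mem_sdiff] at hc
  obtain ⟨hcCom, hcW⟩ := hc
  have hcA : ∀ i ∈ Ns, c ∈ A i := by
    intro i hi
    simp only [commonApproved, Finset.mem_filter, Finset.mem_univ, true_and] at hcCom
    exact hcCom i hi
  set g : ℕ → ℕ :=
    fun m => k * ((Finset.univ.filter (fun i => c ∈ A i ∧ (A i ∩ W).card < m)).card) / n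
    with hg
  have hgmono : Monotone g := by
    intro a b hab
    apply Nat.div_le_div_right
    apply Nat.mul_le_mul_left
    apply Finset.card_le_card
    intro i hi
    simp only [Finset.mem_filter, Finset.mem_univ, true_and] at hi ⊢
    exact ⟨hi.1, lt_of_lt_of_le hi.2 hab⟩
  have hgle : ∀ m, g m ≤ k := by
    intro m
    calc g m ≤ k * n / n := by
          apply Nat.div_le_div_right
          apply Nat.mul_le_mul_left
          exact le_trans (Finset.card_le_card (Finset.filter_subset _ _)) (by simp)
      _ = k := Nat.mul_div_cancel k hn
  have hgℓ : ℓ ≤ g ℓ := by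
    have hsub : Ns ⊆ Finset.univ.filter (fun i => c ∈ A i ∧ (A i ∩ W).card < ℓ) := by
      intro i hi
      simp only [Finset.mem_filter, Finset.mem_univ, true_and]
      exact ⟨hcA i hi, hlt i hi⟩
    have hcard := Finset.card_le_card hsub
    rw [hg]
    rw [Nat.le_div_iff_mul_le hn]
    have hq : (ℓ:ℚ) * n ≤ k * Ns.card := by
      rw [div_le_iff₀ hk0] at hsize
      linarith
    have h2 : ℓ * n ≤ k * Ns.card := by exact_mod_cast hq
    calc ℓ * n ≤ k * Ns.card := h2
      _ ≤ k * _ := Nat.mul_le_mul_left _ hcard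
  set S := (Finset.range (k+1)).filter (fun m => ℓ ≤ m ∧ m ≤ g m) with hS
  have hSne : S.Nonempty := by
    refine ⟨ℓ, ?_⟩
    simp only [hS, Finset.mem_filter, Finset.mem_range]
    exact ⟨Nat.lt_succ_of_le hℓk, le_refl ℓ, hgℓ⟩
  set m := S.max' hSne with hm
  have hmS := S.max'_mem hSne
  simp only [hS, Finset.mem_filter, Finset.mem_range] at hmS
  obtain ⟨hmk, hℓm, hmg⟩ := hmS
  have hgm : g m ∈ S := by
    simp only [hS, Finset.mem_filter, Finset.mem_range]
    exact ⟨Nat.lt_succ_of_le (hgle m), le_trans hℓm hmg, hgmono hmg⟩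
  have hfix : g m = m := le_antisymm (S.le_max' _ hgm) hmg
  have hmem : m ∈ dissatSet A k W c := hfix.symm
  have hbdd : BddAbove (dissatSet A k W c) := by
    refine ⟨k, fun x hx => ?_⟩
    have hxe : x = g x := hx
    rw [hxe]
    exact hgle x
  have hle : m ≤ dissat A k W c := le_csSup hbdd hmem
  rw [hzero c hcW] at hle
  exact absurd (le_trans (le_trans hℓ1 hℓm) hle) (by norm_num)
end

section
/- Consider a PJR-Exact run of an approval-based multi-winner election, fix j with 1 ≤ j ≤ k, and suppose the first j iterations of the run are all normal. For each voter i let ℓ_j(i) = max_{c ∈ A_i \ W_j} ℓ_j(c) (with max ∅ = 0). Then for each voter i, either |A_i ∩ W_j| ≥ ℓ_j(i), or f^j_i ≥ (ℓ_j(i) − |A_i ∩ W_j|)/ℓ_j(i). -/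
open Finset

variable {C : Type*} [Fintype C] [DecidableEq C]

/-- The right-hand side of the dissatisfaction fixpoint equation, as a function of `ℓ`. -/
def hfun {n : ℕ} (A : Fin n → Finset C) (k : ℕ) (W : Finset C) (c : C) (ℓ : ℕ) : ℕ :=
  k * (Finset.univ.filter (fun i => c ∈ A i ∧ (A i ∩ W).card < ℓ)).card / n

lemma hfun_mono {n : ℕ} (A : Fin n → Finset C) (k : ℕ) (W : Finset C) (c : C)
    {ℓ ℓ' : ℕ} (h : ℓ ≤ ℓ') : hfun A k W c ℓ ≤ hfun A k W c ℓ' := by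
  apply Nat.div_le_div_right
  apply Nat.mul_le_mul_left
  apply Finset.card_le_card
  intro i hi
  simp only [Finset.mem_filter] at *
  exact ⟨hi.1, hi.2.1, lt_of_lt_of_le hi.2.2 h⟩

lemma hfun_le {n : ℕ} (hn : 0 < n) (A : Fin n → Finset C) (k : ℕ) (W : Finset C) (c : C)
    (ℓ : ℕ) : hfun A k W c ℓ ≤ k := by
  have h1 : (Finset.univ.filter (fun i => c ∈ A i ∧ (A i ∩ W).card < ℓ)).card ≤ n := by
    calc _ ≤ (Finset.univ : Finset (Fin n)).card := Finset.card_filter_le _ _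
    _ = n := by simp
  calc hfun A k W c ℓ ≤ k * n / n := Nat.div_le_div_right (Nat.mul_le_mul_left _ h1)
  _ = k := Nat.mul_div_cancel k hn

lemma hfun_anti {n : ℕ} (A : Fin n → Finset C) (k : ℕ) {W W' : Finset C} (c : C)
    (hWW : W ⊆ W') (ℓ : ℕ) : hfun A k W' c ℓ ≤ hfun A k W c ℓ := by
  apply Nat.div_le_div_right
  apply Nat.mul_le_mul_left
  apply Finset.card_le_card
  intro i hi
  simp only [Finset.mem_filter] at *
  exact ⟨hi.1, hi.2.1, lt_of_le_of_lt
    (Finset.card_le_card (Finset.inter_subset_inter (le_refl _) hWW)) hi.2.2⟩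

lemma dissatSet_eq {n : ℕ} (A : Fin n → Finset C) (k : ℕ) (W : Finset C) (c : C) :
    dissatSet A k W c = {ℓ : ℕ | ℓ = hfun A k W c ℓ} := rfl

lemma zero_mem_dissatSet {n : ℕ} (A : Fin n → Finset C) (k : ℕ) (W : Finset C) (c : C) :
    0 ∈ dissatSet A k W c := by
  simp [dissatSet]

lemma dissatSet_bdd {n : ℕ} (hn : 0 < n) (A : Fin n → Finset C) (k : ℕ) (W : Finset C)
    (c : C) : BddAbove (dissatSet A k W c) := by
  refine ⟨k, fun ℓ hl => ?_⟩
  rw [dissatSet_eq] at hl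
  rw [hl]
  exact hfun_le hn A k W c ℓ

lemma dissat_mem {n : ℕ} (hn : 0 < n) (A : Fin n → Finset C) (k : ℕ) (W : Finset C)
    (c : C) : dissat A k W c ∈ dissatSet A k W c :=
  Nat.sSup_mem ⟨0, zero_mem_dissatSet A k W c⟩ (dissatSet_bdd hn A k W c)

lemma dissat_fixed {n : ℕ} (hn : 0 < n) (A : Fin n → Finset C) (k : ℕ) (W : Finset C)
    (c : C) : dissat A k W c = hfun A k W c (dissat A k W c) :=
  dissat_mem hn A k W c

lemma le_dissat {n : ℕ} (hn : 0 < n) (A : Fin n → Finset C) (k : ℕ) (W : Finset C)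
    (c : C) {ℓ : ℕ} (h : ℓ ≤ hfun A k W c ℓ) : ℓ ≤ dissat A k W c := by
  set S : Set ℕ := {m | m ≤ hfun A k W c m} with hS
  have hSb : BddAbove S := ⟨k, fun m hm => le_trans hm (hfun_le hn A k W c m)⟩
  have hSne : S.Nonempty := ⟨ℓ, h⟩
  set m := sSup S with hm
  have hmS : m ∈ S := Nat.sSup_mem hSne hSb
  have h1 : m ≤ hfun A k W c m := hmS
  have h2 : hfun A k W c m ∈ S := hfun_mono A k W c h1
  have h3 : hfun A k W c m ≤ m := le_csSup hSb h2
  have hfix : m ∈ dissatSet A k W c := le_antisymm h1 h3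
  calc ℓ ≤ m := le_csSup hSb h
  _ ≤ dissat A k W c := le_csSup (dissatSet_bdd hn A k W c) hfix

lemma dissat_anti {n : ℕ} (hn : 0 < n) (A : Fin n → Finset C) (k : ℕ) {W W' : Finset C}
    (c : C) (hWW : W ⊆ W') : dissat A k W' c ≤ dissat A k W c := by
  apply le_dissat hn
  calc dissat A k W' c = hfun A k W' c (dissat A k W' c) := dissat_fixed hn A k W' c
  _ ≤ hfun A k W c (dissat A k W' c) := hfun_anti A k c hWW _

lemma frac_mono {s L' L : ℕ} (h1 : s < L') (h2 : L' ≤ L) :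
    ((L' : ℚ) - (s : ℚ)) / (L' : ℚ) ≤ ((L : ℚ) - (s : ℚ)) / (L : ℚ) := by
  have hL' : (0 : ℚ) < L' := by exact_mod_cast Nat.pos_of_ne_zero (by omega)
  have hL : (0 : ℚ) < L := lt_of_lt_of_le hL' (by exact_mod_cast h2)
  rw [div_le_div_iff₀ hL' hL]
  have hs : (0 : ℚ) ≤ s := Nat.cast_nonneg s
  have h2' : (L' : ℚ) ≤ L := by exact_mod_cast h2
  nlinarith

lemma Wset_zero (w : ℕ → C) : Wset w 0 = ∅ := by
  simp [Wset]

lemma Wset_succ (w : ℕ → C) (j : ℕ) : Wset w (j + 1) = insert (w (j + 1)) (Wset w j) := by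
  have : Finset.Icc 1 (j + 1) = insert (j + 1) (Finset.Icc 1 j) := by
    ext m; simp [Finset.mem_Icc]; omega
  rw [Wset, this, Finset.image_insert, Wset]

lemma keep_fractions_aux {n k : ℕ} (hn : 0 < n) (hk : 1 ≤ k)
    (A : Fin n → Finset C) (R : PJRExactRun n k A) :
    ∀ j : ℕ, j ≤ k → (∀ j' : ℕ, 1 ≤ j' → j' ≤ j → NormalIteration R j') →
    ∀ i : Fin n,
      dissatVoterAll A k (Wset R.w j) i ≤ (A i ∩ Wset R.w j).card ∨
      ((dissatVoterAll A k (Wset R.w j) i : ℚ) - ((A i ∩ Wset R.w j).card : ℚ)) /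
          (dissatVoterAll A k (Wset R.w j) i : ℚ) ≤ R.f j i := by
  intro j
  induction j with
  | zero =>
    intro _ _ i
    rw [Wset_zero]
    set L := dissatVoterAll A k (∅ : Finset C) i with hL
    rcases Nat.eq_zero_or_pos L with h0 | hpos
    · left; simp [h0]
    · right
      have hLQ : (0 : ℚ) < L := by exact_mod_cast hpos
      rw [R.f_zero]
      simp only [Finset.inter_empty, Finset.card_empty, Nat.cast_zero, sub_zero]
      rw [div_self (ne_of_gt hLQ)]
  | succ j ih =>
    intro hjk hnorm i
    have hjk' : j ≤ k := Nat.le_of_succ_le hjk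
    have hnorm' : ∀ j' : ℕ, 1 ≤ j' → j' ≤ j → NormalIteration R j' :=
      fun j' h1 h2 => hnorm j' h1 (h2.trans (Nat.le_succ j))
    have hW : Wset R.w (j + 1) = insert (R.w (j + 1)) (Wset R.w j) := Wset_succ R.w j
    have hwnotW : R.w (j + 1) ∉ Wset R.w j := by
      rw [Wset]
      simp only [Finset.mem_image, Finset.mem_Icc, not_exists]
      rintro j' ⟨⟨hj'1, hj'j⟩, heq⟩
      have := R.w_inj j' (j + 1) hj'1 (le_trans (le_trans hj'j (Nat.le_succ j)) hjk)
        (by omega) hjk heq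
      omega
    have hsub : Wset R.w j ⊆ Wset R.w (j + 1) := by
      rw [hW]; exact Finset.subset_insert _ _
    by_cases hci : R.w (j + 1) ∈ A i
    · -- the winner is approved by voter i: use normality of iteration j+1
      have hcard : (A i ∩ Wset R.w (j + 1)).card = (A i ∩ Wset R.w j).card + 1 := by
        rw [hW, Finset.inter_comm, Finset.insert_inter_of_mem hci,
          Finset.card_insert_of_notMem (fun h => hwnotW (Finset.mem_of_mem_inter_left h)),
          Finset.inter_comm]
      set L' := dissatVoterAll A k (Wset R.w (j + 1)) i with hL'def
      rcases le_or_gt L' ((A i ∩ Wset R.w (j + 1)).card) with hle | hlt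
      · left; exact hle
      · right
        set L := dissatVoter A k (Wset R.w j) i (R.w (j + 1)) with hLdef
        have hL'L : L' ≤ L := by
          rw [hL'def, hLdef, dissatVoterAll, dissatVoter, ← hW]
          exact Finset.sup_mono_fun (fun c _ => dissat_anti hn A k c hsub)
        have hnj := (hnorm (j + 1) (by omega) le_rfl).2 i hci
        simp only [Nat.add_sub_cancel] at hnj
        have hcardlt : (A i ∩ Wset R.w j).card < L := by omega
        have hstep := hnj hcardlt
        refine le_trans ?_ hstep
        exact frac_mono hlt hL'L
    · -- the winner is not approved by voter i: use the induction hypothesis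
      have hcard : A i ∩ Wset R.w (j + 1) = A i ∩ Wset R.w j := by
        rw [hW, Finset.inter_comm, Finset.insert_inter_of_notMem hci, Finset.inter_comm]
      have hf : R.f (j + 1) i = R.f j i := by
        have := R.f_untouched (j + 1) (by omega) hjk i hci
        simpa using this
      set L' := dissatVoterAll A k (Wset R.w (j + 1)) i with hL'def
      rcases le_or_gt L' ((A i ∩ Wset R.w (j + 1)).card) with hle | hlt
      · left; exact hle
      · right
        set L := dissatVoterAll A k (Wset R.w j) i with hLdef
        have hL'L : L' ≤ L := by
          calc L' = (A i \ Wset R.w (j + 1)).sup (dissat A k (Wset R.w (j + 1))) := rfl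
          _ ≤ (A i \ Wset R.w (j + 1)).sup (dissat A k (Wset R.w j)) :=
              Finset.sup_mono_fun (fun c _ => dissat_anti hn A k c hsub)
          _ ≤ (A i \ Wset R.w j).sup (dissat A k (Wset R.w j)) :=
              Finset.sup_mono (Finset.sdiff_subset_sdiff (le_refl _) hsub)
        rcases ih hjk' hnorm' i with h | h
        · exfalso
          rw [hcard] at hlt
          omega
        · rw [hcard, hf]
          rw [hcard] at hlt
          exact le_trans (frac_mono hlt hL'L) h

/-- Lemma 2 of the paper: after `j` normal iterations, every voter `i`
either already approves `ℓ_j(i)` winners, or retains a fraction of her vote of at least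
`(ℓ_j(i) − |A_i ∩ W_j|)/ℓ_j(i)`. -/
theorem normal_iterations_keep_fractions {C : Type*} [Fintype C] [DecidableEq C] {n k : ℕ}
    (hn : 0 < n) (hk : 1 ≤ k) (hkC : k ≤ Fintype.card C)
    (A : Fin n → Finset C) (R : PJRExactRun n k A)
    (j : ℕ) (hj1 : 1 ≤ j) (hjk : j ≤ k)
    (hnormal : ∀ j' : ℕ, 1 ≤ j' → j' ≤ j → NormalIteration R j') :
    ∀ i : Fin n,
      dissatVoterAll A k (Wset R.w j) i ≤ (A i ∩ Wset R.w j).card ∨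
      ((dissatVoterAll A k (Wset R.w j) i : ℚ) - ((A i ∩ Wset R.w j).card : ℚ)) /
          (dissatVoterAll A k (Wset R.w j) i : ℚ) ≤ R.f j i :=
  keep_fractions_aux hn hk A R j hjk hnormal
end

section
/- Consider a PJR-Exact run of an approval-based multi-winner election, fix j with 1 ≤ j ≤ k−1, and suppose the first j iterations of the run are all normal. Then after these j iterations no candidate in C \ W_j is in a starving state. -/
open Finset

variable {C : Type*} [Fintype C] [DecidableEq C]

lemma dissat_mono {C : Type*} [Fintype C] [DecidableEq C] {n : ℕ} (hn : 0 < n)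
    (A : Fin n → Finset C) (k : ℕ) {W W' : Finset C} (hW : W ⊆ W') (c : C) :
    dissat A k W' c ≤ dissat A k W c := by
  classical
  set F : Finset C → ℕ → ℕ :=
    fun V ℓ => k * ((Finset.univ.filter (fun i => c ∈ A i ∧ (A i ∩ V).card < ℓ)).card) / n
    with hF
  have hset : ∀ V : Finset C, dissatSet A k V c = {ℓ | ℓ = F V ℓ} := fun V => rfl
  have hFk : ∀ V ℓ, F V ℓ ≤ k := by
    intro V ℓ
    have hcard : (Finset.univ.filter (fun i => c ∈ A i ∧ (A i ∩ V).card < ℓ)).card ≤ n := by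
      simpa using Finset.card_filter_le Finset.univ (fun i => c ∈ A i ∧ (A i ∩ V).card < ℓ)
    calc F V ℓ ≤ k * n / n := Nat.div_le_div_right (Nat.mul_le_mul_left k hcard)
    _ = k := Nat.mul_div_cancel k hn
  have hFmono : ∀ V : Finset C, Monotone (F V) := by
    intro V a b hab
    apply Nat.div_le_div_right
    apply Nat.mul_le_mul_left
    apply Finset.card_le_card
    intro i hi
    simp only [Finset.mem_filter] at hi ⊢
    exact ⟨hi.1, hi.2.1, lt_of_lt_of_le hi.2.2 hab⟩
  have hFW : ∀ ℓ, F W' ℓ ≤ F W ℓ := by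
    intro ℓ
    apply Nat.div_le_div_right
    apply Nat.mul_le_mul_left
    apply Finset.card_le_card
    intro i hi
    simp only [Finset.mem_filter] at hi ⊢
    refine ⟨hi.1, hi.2.1, lt_of_le_of_lt ?_ hi.2.2⟩
    exact Finset.card_le_card (Finset.inter_subset_inter (Finset.Subset.refl _) hW)
  -- the set of postfixpoints of `F W`
  set S : Set ℕ := {ℓ | ℓ ≤ F W ℓ} with hS
  have hSne : S.Nonempty := ⟨0, Nat.zero_le _⟩
  have hSbdd : BddAbove S := ⟨k, fun ℓ hℓ => le_trans hℓ (hFk W ℓ)⟩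
  set m : ℕ := sSup S with hm
  have hmS : m ∈ S := Nat.sSup_mem hSne hSbdd
  have hFmS : F W m ∈ S := hFmono W hmS
  have hmfix : m = F W m := le_antisymm hmS (le_csSup hSbdd hFmS)
  have hmem : m ∈ dissatSet A k W c := by rw [hset]; exact hmfix
  have hdbdd : BddAbove (dissatSet A k W c) := by
    refine ⟨k, fun ℓ hℓ => ?_⟩
    rw [hset] at hℓ
    exact hℓ.trans_le (hFk W ℓ)
  have hd'bdd : BddAbove (dissatSet A k W' c) := by
    refine ⟨k, fun ℓ hℓ => ?_⟩
    have hℓ' : ℓ = F W' ℓ := hℓ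
    exact hℓ'.trans_le (hFk W' ℓ)
  have hd'ne : (dissatSet A k W' c).Nonempty := by
    refine ⟨0, ?_⟩
    show (0 : ℕ) = F W' 0
    simp [hF]
  have hd'mem : dissat A k W' c ∈ dissatSet A k W' c := Nat.sSup_mem hd'ne hd'bdd
  have hpost : dissat A k W' c ∈ S := by
    have h1 : dissat A k W' c = F W' (dissat A k W' c) := hd'mem
    exact le_trans h1.le (hFW _)
  calc dissat A k W' c ≤ m := le_csSup hSbdd hpost
  _ ≤ dissat A k W c := le_csSup hdbdd hmem

lemma dissatVoter_le {C : Type*} [Fintype C] [DecidableEq C] {n : ℕ} (hn : 0 < n)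
    (A : Fin n → Finset C) (k : ℕ) {W W' : Finset C} (hW : W ⊆ W') {i : Fin n} {c c' : C}
    (hsub : A i \ insert c' W' ⊆ A i \ insert c W) :
    dissatVoter A k W' i c' ≤ dissatVoter A k W i c := by
  apply Finset.sup_le
  intro b hb
  exact le_trans (dissat_mono hn A k hW b) (Finset.le_sup (hsub hb))

lemma div_sub_mono {a b m : ℕ} (h0 : m < a) (hab : a ≤ b) :
    ((a : ℚ) - m) / a ≤ ((b : ℚ) - m) / b := by
  have ha : (0:ℚ) < a := by exact_mod_cast (Nat.pos_of_ne_zero (by omega))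
  have hb : (0:ℚ) < b := by exact_mod_cast (Nat.pos_of_ne_zero (by omega))
  have hab' : (a:ℚ) ≤ b := by exact_mod_cast hab
  have hm : (0:ℚ) ≤ m := Nat.cast_nonneg m
  rw [div_le_div_iff₀ ha hb]
  nlinarith

set_option maxHeartbeats 1000000 in
lemma no_starving_aux {C : Type*} [Fintype C] [DecidableEq C] {n k : ℕ}
    (hn : 0 < n) (A : Fin n → Finset C) (R : PJRExactRun n k A) :
    ∀ j : ℕ, j ≤ k → (∀ j' : ℕ, 1 ≤ j' → j' ≤ j → NormalIteration R j') →
    ∀ c : C, c ∉ Wset R.w j → ¬ StarvingState A k (R.f j) (Wset R.w j) c := by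
  intro j
  induction j with
  | zero =>
    rintro _ _ c hc ⟨i, hci, hlt, hflt⟩
    rw [R.f_zero] at hflt
    set L := dissatVoter A k (Wset R.w 0) i c with hL
    have hL0 : (0:ℚ) < L := by exact_mod_cast Nat.pos_of_ne_zero (by omega)
    have hm0 : (A i ∩ Wset R.w 0).card = 0 := by rw [Wset_zero]; simp
    rw [hm0] at hflt
    simp only [Nat.cast_zero, sub_zero] at hflt
    rw [div_self (ne_of_gt hL0)] at hflt
    exact lt_irrefl _ hflt
  | succ j ih =>
    rintro hjk hnorm c hc ⟨i, hci, hlt, hflt⟩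
    have hWsucc : Wset R.w (j + 1) = insert (R.w (j + 1)) (Wset R.w j) := Wset_succ R.w j
    have hWsub : Wset R.w j ⊆ Wset R.w (j + 1) := by rw [hWsucc]; exact Finset.subset_insert _ _
    set L' := dissatVoter A k (Wset R.w (j + 1)) i c with hL'
    set m' := (A i ∩ Wset R.w (j + 1)).card with hm'
    by_cases hw : R.w (j + 1) ∈ A i
    · -- voter approves the new winner: use normality of iteration j+1
      have hnj := (hnorm (j + 1) (by omega) le_rfl).2 i hw
      have hnj' :
          (A i ∩ Wset R.w j).card < dissatVoter A k (Wset R.w j) i (R.w (j + 1)) →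
          ((dissatVoter A k (Wset R.w j) i (R.w (j + 1)) : ℚ) - (m' : ℚ)) /
            (dissatVoter A k (Wset R.w j) i (R.w (j + 1)) : ℚ) ≤ R.f (j + 1) i := hnj
      set D := dissatVoter A k (Wset R.w j) i (R.w (j + 1)) with hD
      have hLD : L' ≤ D := by
        apply dissatVoter_le hn A k hWsub
        intro x hx
        rw [Finset.mem_sdiff] at hx ⊢
        refine ⟨hx.1, fun hxm => hx.2 (Finset.mem_insert_of_mem ?_)⟩
        rw [hWsucc]
        exact hxm
      have hmm : (A i ∩ Wset R.w j).card ≤ m' :=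
        Finset.card_le_card (Finset.inter_subset_inter (Finset.Subset.refl _) hWsub)
      have hf := hnj' (by omega)
      have hmono : ((L' : ℚ) - m') / L' ≤ ((D : ℚ) - m') / D := div_sub_mono hlt hLD
      linarith
    · -- voter does not approve the new winner: use the induction hypothesis
      have hfeq : R.f (j + 1) i = R.f j i := R.f_untouched (j + 1) (by omega) hjk i hw
      have hinter : A i ∩ Wset R.w (j + 1) = A i ∩ Wset R.w j := by
        rw [hWsucc]
        ext x
        simp only [Finset.mem_inter, Finset.mem_insert]
        constructor
        · rintro ⟨hx1, hx2 | hx2⟩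
          · exact absurd (hx2 ▸ hx1) hw
          · exact ⟨hx1, hx2⟩
        · rintro ⟨hx1, hx2⟩; exact ⟨hx1, Or.inr hx2⟩
      have hcW : c ∉ Wset R.w j := fun h => hc (hWsub h)
      set L'' := dissatVoter A k (Wset R.w j) i c with hL''
      have hLL : L' ≤ L'' := by
        apply dissatVoter_le hn A k hWsub
        intro x hx
        rw [Finset.mem_sdiff] at hx ⊢
        refine ⟨hx.1, fun hxm => hx.2 ?_⟩
        rcases Finset.mem_insert.mp hxm with h | h
        · exact h ▸ Finset.mem_insert_self _ _
        · exact Finset.mem_insert_of_mem (hWsub h)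
      have hih := ih (by omega) (fun j' h1 h2 => hnorm j' h1 (h2.trans (Nat.le_succ j))) c hcW
      rw [StarvingState] at hih
      push_neg at hih
      have hkey := hih i hci
      rw [← hinter, ← hm'] at hkey
      have hkey' := hkey (by omega)
      have hmono : ((L' : ℚ) - m') / L' ≤ ((L'' : ℚ) - m') / L'' := div_sub_mono hlt hLL
      rw [hfeq] at hflt
      linarith

/-- Corollary 1 of the paper: after `j` normal iterations (1 ≤ j ≤ k−1),
no unelected candidate is in a starving state. -/
theorem normal_iterations_no_starving {C : Type*} [Fintype C] [DecidableEq C] {n k : ℕ}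
    (hn : 0 < n) (hk : 1 ≤ k) (hkC : k ≤ Fintype.card C)
    (A : Fin n → Finset C) (R : PJRExactRun n k A)
    (j : ℕ) (hj1 : 1 ≤ j) (hjk : j ≤ k - 1)
    (hnormal : ∀ j' : ℕ, 1 ≤ j' → j' ≤ j → NormalIteration R j') :
    ∀ c : C, c ∉ Wset R.w j → ¬ StarvingState A k (R.f j) (Wset R.w j) c :=
  no_starving_aux hn A R j (by omega) hnormal
end

section
/- The phragmén-STV rule satisfies PJR: for every approval-based multi-winner election, the committee W of size k produced by phragmén-STV provides proportional justified representation, regardless of how ties among candidates with maximal remaining support are broken. -/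
open Finset

variable {C : Type*} [Fintype C] [DecidableEq C]

/-- A run of the phragmén-STV rule (any tie-breaking among candidates with maximal
remaining support is allowed). -/
structure PhragmenSTVRun (n k : ℕ) (A : Fin n → Finset C) where
  w : ℕ → C
  f : ℕ → Fin n → ℚ
  f_zero : ∀ i, f 0 i = 1
  /-- the winner of each round has not been elected before -/
  w_new : ∀ j, 1 ≤ j → j ≤ k → w j ∉ Wset w (j - 1)
  /-- the winner of each round has maximal remaining support -/
  w_max : ∀ j, 1 ≤ j → j ≤ k → ∀ c : C, c ∉ Wset w (j - 1) →
    supp A (f (j - 1)) c ≤ supp A (f (j - 1)) (w j)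
  /-- voters not approving the winner keep their fractions -/
  f_untouched : ∀ j, 1 ≤ j → j ≤ k → ∀ i, w j ∉ A i → f j i = f (j - 1) i
  /-- if the winner's support is at most the quota, supporters lose their whole fractions -/
  f_update_small : ∀ j, 1 ≤ j → j ≤ k → supp A (f (j - 1)) (w j) ≤ quota n k →
    ∀ i, w j ∈ A i → f j i = 0
  /-- otherwise the supporters' fractions are scaled down by `(s − q)/s` -/
  f_update_big : ∀ j, 1 ≤ j → j ≤ k → quota n k < supp A (f (j - 1)) (w j) →
    ∀ i, w j ∈ A i →
      f j i = f (j - 1) i * (supp A (f (j - 1)) (w j) - quota n k) / supp A (f (j - 1)) (w j)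


section STVHelpers

variable {n k : ℕ} {A : Fin n → Finset C}

lemma quota_pos (hn : 0 < n) (hk : 1 ≤ k) : 0 < quota n k := by
  unfold quota
  have h1 : (0:ℚ) < n := by exact_mod_cast hn
  have h2 : (0:ℚ) < k := by exact_mod_cast hk
  exact div_pos h1 h2

lemma stv_f_nonneg (hn : 0 < n) (hk : 1 ≤ k) (R : PhragmenSTVRun n k A) :
    ∀ j, j ≤ k → ∀ i, 0 ≤ R.f j i := by
  intro j
  induction j with
  | zero => intro _ i; rw [R.f_zero]; norm_num
  | succ j ih =>
    intro hj i
    have hj' : j ≤ k := Nat.le_of_succ_le hj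
    have h1 : 1 ≤ j + 1 := Nat.succ_le_succ (Nat.zero_le j)
    have hsub : j + 1 - 1 = j := rfl
    by_cases hw : R.w (j+1) ∈ A i
    · by_cases hs : supp A (R.f j) (R.w (j+1)) ≤ quota n k
      · rw [R.f_update_small (j+1) h1 hj hs i hw]
      · push_neg at hs
        rw [R.f_update_big (j+1) h1 hj hs i hw]
        simp only [Nat.add_sub_cancel]
        have hq := quota_pos hn hk
        have hs0 : 0 < supp A (R.f j) (R.w (j+1)) := lt_trans hq hs
        apply div_nonneg
        · exact mul_nonneg (ih hj' i) (by linarith)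
        · linarith
    · rw [R.f_untouched (j+1) h1 hj i hw]; exact ih hj' i

lemma stv_f_mono (hn : 0 < n) (hk : 1 ≤ k) (R : PhragmenSTVRun n k A) :
    ∀ j, j + 1 ≤ k → ∀ i, R.f (j+1) i ≤ R.f j i := by
  intro j hj i
  have hj' : j ≤ k := Nat.le_of_succ_le hj
  have h1 : 1 ≤ j + 1 := Nat.succ_le_succ (Nat.zero_le j)
  by_cases hw : R.w (j+1) ∈ A i
  · by_cases hs : supp A (R.f j) (R.w (j+1)) ≤ quota n k
    · rw [R.f_update_small (j+1) h1 hj hs i hw]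
      exact stv_f_nonneg hn hk R j hj' i
    · push_neg at hs
      rw [R.f_update_big (j+1) h1 hj hs i hw]
      simp only [Nat.add_sub_cancel]
      have hq := quota_pos hn hk
      have hs0 : 0 < supp A (R.f j) (R.w (j+1)) := lt_trans hq hs
      rw [div_le_iff₀ hs0]
      have := stv_f_nonneg hn hk R j hj' i
      nlinarith
  · rw [R.f_untouched (j+1) h1 hj i hw]
    simp

/-- The total fraction removed from the winner's approvers in one round. -/
lemma stv_removal (hn : 0 < n) (hk : 1 ≤ k) (R : PhragmenSTVRun n k A)
    (j : ℕ) (hj : j + 1 ≤ k) :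
    ∑ i ∈ approvers A (R.w (j+1)), (R.f j i - R.f (j+1) i)
      = min (supp A (R.f j) (R.w (j+1))) (quota n k) := by
  have h1 : 1 ≤ j + 1 := Nat.succ_le_succ (Nat.zero_le j)
  set s := supp A (R.f j) (R.w (j+1)) with hs_def
  by_cases hs : s ≤ quota n k
  · rw [min_eq_left hs]
    have : ∀ i ∈ approvers A (R.w (j+1)), R.f j i - R.f (j+1) i = R.f j i := by
      intro i hi
      rw [approvers, Finset.mem_filter] at hi
      rw [R.f_update_small (j+1) h1 hj hs i hi.2, sub_zero]
    rw [Finset.sum_congr rfl this]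
    rfl
  · push_neg at hs
    rw [min_eq_right hs.le]
    have hq := quota_pos hn hk
    have hs0 : 0 < s := lt_trans hq hs
    have hterm : ∀ i ∈ approvers A (R.w (j+1)),
        R.f j i - R.f (j+1) i = R.f j i * (quota n k / s) := by
      intro i hi
      rw [approvers, Finset.mem_filter] at hi
      rw [R.f_update_big (j+1) h1 hj hs i hi.2]
      simp only [Nat.add_sub_cancel]
      rw [← hs_def]
      field_simp
      ring
    rw [Finset.sum_congr rfl hterm, ← Finset.sum_mul]
    have hsum : ∑ i ∈ approvers A (R.w (j+1)), R.f j i = s := rfl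
    rw [hsum, mul_div_assoc', mul_comm, mul_div_assoc, div_self (ne_of_gt hs0), mul_one]

/-- Voters not approving the winner have zero difference; so the whole-population
removal equals the approvers' removal. -/
lemma stv_removal_univ (hn : 0 < n) (hk : 1 ≤ k) (R : PhragmenSTVRun n k A)
    (j : ℕ) (hj : j + 1 ≤ k) :
    ∑ i : Fin n, (R.f j i - R.f (j+1) i)
      = min (supp A (R.f j) (R.w (j+1))) (quota n k) := by
  have h1 : 1 ≤ j + 1 := Nat.succ_le_succ (Nat.zero_le j)
  rw [← stv_removal hn hk R j hj]
  symm
  apply Finset.sum_subset (Finset.subset_univ _)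
  intro i _ hi
  rw [approvers, Finset.mem_filter] at hi
  push_neg at hi
  rw [R.f_untouched (j+1) h1 hj i (hi (Finset.mem_univ i))]
  simp

lemma Wset_mono (w : ℕ → C) {j j' : ℕ} (h : j ≤ j') : Wset w j ⊆ Wset w j' := by
  apply Finset.image_subset_image
  exact Finset.Icc_subset_Icc_right h

lemma stv_w_injOn (R : PhragmenSTVRun n k A) :
    Set.InjOn R.w (Finset.Icc 1 k) := by
  intro a ha b hb hab
  simp only [Finset.coe_Icc, Set.mem_Icc] at ha hb
  by_contra hne
  rcases Nat.lt_or_ge a b with h | h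
  · have := R.w_new b hb.1 hb.2
    apply this
    rw [Wset, Finset.mem_image]
    exact ⟨a, Finset.mem_Icc.2 ⟨ha.1, Nat.le_sub_one_of_lt h⟩, hab⟩
  · have hlt : b < a := lt_of_le_of_ne h (fun h' => hne h'.symm)
    have := R.w_new a ha.1 ha.2
    apply this
    rw [Wset, Finset.mem_image]
    exact ⟨b, Finset.mem_Icc.2 ⟨hb.1, Nat.le_sub_one_of_lt hlt⟩, hab.symm⟩

end STVHelpers

/-- phragmén-STV satisfies PJR, regardless of tie-breaking. -/
theorem phragmenSTV_satisfies_PJR {C : Type*} [Fintype C] [DecidableEq C] {n k : ℕ}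
    (hn : 0 < n) (hk : 1 ≤ k) (hkC : k ≤ Fintype.card C)
    (A : Fin n → Finset C) (R : PhragmenSTVRun n k A) :
    ProvidesPJR A k (Wset R.w k) := by
  intro l hl1 hlk Ns hcoh
  obtain ⟨hNscard, hcommon⟩ := hcoh
  by_contra hcon
  push_neg at hcon
  have hq := quota_pos hn hk
  have hkq : (0:ℚ) < k := by exact_mod_cast hk
  have hl1q : (1:ℚ) ≤ l := by exact_mod_cast hl1
  -- Ns is nonempty
  have hNsQ : (0:ℚ) < Ns.card := by
    have hnq : (0:ℚ) < n := by exact_mod_cast hn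
    have : (0:ℚ) < (l:ℚ) * n / k := by positivity
    linarith
  have hNe : Ns.Nonempty := by
    rw [← Finset.card_pos]
    exact_mod_cast hNsQ
  -- there is a commonly-approved candidate not in the final committee
  have hsubWB : commonApproved A Ns ∩ Wset R.w k ⊆ Wset R.w k ∩ Ns.biUnion A := by
    intro c hc
    rw [Finset.mem_inter] at hc ⊢
    refine ⟨hc.2, ?_⟩
    rw [commonApproved, Finset.mem_filter] at hc
    obtain ⟨i0, hi0⟩ := hNe
    exact Finset.mem_biUnion.2 ⟨i0, hi0, hc.1.2 i0 hi0⟩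
  have hex : (commonApproved A Ns \ Wset R.w k).Nonempty := by
    by_contra h
    rw [Finset.not_nonempty_iff_eq_empty, Finset.sdiff_eq_empty_iff_subset] at h
    have hsub2 : commonApproved A Ns ⊆ Wset R.w k ∩ Ns.biUnion A := by
      intro c hc
      exact hsubWB (Finset.mem_inter.2 ⟨hc, h hc⟩)
    have := Finset.card_le_card hsub2
    omega
  obtain ⟨c, hc⟩ := hex
  rw [Finset.mem_sdiff] at hc
  have hcA : ∀ i ∈ Ns, c ∈ A i := by
    have := hc.1
    rw [commonApproved, Finset.mem_filter] at this
    exact this.2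
  have hcW : ∀ j ≤ k, c ∉ Wset R.w j := fun j hj h => hc.2 (Wset_mono R.w hj h)
  have hNsub : Ns ⊆ approvers A c := by
    intro i hi
    rw [approvers, Finset.mem_filter]
    exact ⟨Finset.mem_univ i, hcA i hi⟩
  -- the count of rounds whose winner is approved by someone in Ns
  set T : ℕ → ℕ := fun j => ((Finset.Icc 1 j).filter (fun m => R.w m ∈ Ns.biUnion A)).card
    with hT_def
  have hT : ∀ j ≤ k, (T j : ℚ) ≤ (l:ℚ) - 1 := by
    intro j hj
    have hle : T j ≤ (Wset R.w k ∩ Ns.biUnion A).card := by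
      apply Finset.card_le_card_of_injOn R.w
      · intro m hm
        rw [Finset.mem_coe, Finset.mem_filter] at hm
        refine Finset.mem_coe.2 (Finset.mem_inter.2 ⟨?_, hm.2⟩)
        rw [Wset, Finset.mem_image]
        refine ⟨m, ?_, rfl⟩
        rw [Finset.mem_Icc] at hm ⊢
        exact ⟨hm.1.1, le_trans hm.1.2 hj⟩
      · apply Set.InjOn.mono _ (stv_w_injOn R)
        intro m hm
        simp only [Finset.coe_filter, Set.mem_setOf_eq] at hm
        rw [Finset.mem_Icc] at hm
        simp only [Finset.coe_Icc, Set.mem_Icc]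
        exact ⟨hm.1.1, le_trans hm.1.2 hj⟩
    have : T j + 1 ≤ l := by omega
    have : ((T j : ℕ) : ℚ) + 1 ≤ (l:ℚ) := by exact_mod_cast this
    linarith
  -- the key invariant on the remaining fraction of Ns
  have hinv : ∀ j, j ≤ k → (Ns.card:ℚ) - (T j : ℚ) * quota n k ≤ ∑ i ∈ Ns, R.f j i := by
    intro j
    induction j with
    | zero =>
      intro _
      have hT0 : T 0 = 0 := by
        rw [hT_def]
        simp
      rw [hT0]
      have : ∑ i ∈ Ns, R.f 0 i = (Ns.card : ℚ) := by
        rw [Finset.sum_congr rfl (fun i _ => R.f_zero i)]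
        simp
      rw [this]
      simp
    | succ j ih =>
      intro hj
      have hj' : j ≤ k := Nat.le_of_succ_le hj
      have ihj := ih hj'
      have hIcc : Finset.Icc 1 (j+1) = insert (j+1) (Finset.Icc 1 j) := by
        ext m
        simp only [Finset.mem_Icc, Finset.mem_insert]
        omega
      by_cases hPj : R.w (j+1) ∈ Ns.biUnion A
      · -- the winner is approved by someone in Ns; at most q is removed from Ns
        have hTsucc : T (j+1) = T j + 1 := by
          rw [hT_def]
          simp only
          rw [hIcc, Finset.filter_insert, if_pos hPj, Finset.card_insert_of_notMem]
          simp
        have hdiff : ∑ i ∈ Ns, (R.f j i - R.f (j+1) i) ≤ quota n k := by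
          calc ∑ i ∈ Ns, (R.f j i - R.f (j+1) i)
              ≤ ∑ i : Fin n, (R.f j i - R.f (j+1) i) := by
                apply Finset.sum_le_sum_of_subset_of_nonneg (Finset.subset_univ Ns)
                intro i _ _
                have := stv_f_mono hn hk R j hj i
                linarith
            _ = min (supp A (R.f j) (R.w (j+1))) (quota n k) := stv_removal_univ hn hk R j hj
            _ ≤ quota n k := min_le_right _ _
        rw [Finset.sum_sub_distrib] at hdiff
        rw [hTsucc]
        push_cast
        linarith
      · -- the winner is approved by nobody in Ns; nothing changes
        have hTsucc : T (j+1) = T j := by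
          rw [hT_def]
          simp only
          rw [hIcc, Finset.filter_insert, if_neg hPj]
        have heq : ∑ i ∈ Ns, R.f (j+1) i = ∑ i ∈ Ns, R.f j i := by
          apply Finset.sum_congr rfl
          intro i hi
          have hwA : R.w (j+1) ∉ A i := fun h => hPj (Finset.mem_biUnion.2 ⟨i, hi, h⟩)
          exact R.f_untouched (j+1) (Nat.succ_le_succ (Nat.zero_le j)) hj i hwA
        rw [hTsucc, heq]
        exact ihj
  -- hence the remaining fraction of Ns is always at least the quota
  have hNsq : ∀ j ≤ k, quota n k ≤ ∑ i ∈ Ns, R.f j i := by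
    intro j hj
    have h1 := hinv j hj
    have h2 := hT j hj
    have h3 : (l:ℚ) * quota n k ≤ (Ns.card:ℚ) := by
      rw [quota, ← mul_div_assoc]
      exact hNscard
    nlinarith
  -- hence the winner of every round has support at least the quota
  have hws : ∀ j, j + 1 ≤ k → quota n k ≤ supp A (R.f j) (R.w (j+1)) := by
    intro j hj
    have h1 := hNsq j (Nat.le_of_succ_le hj)
    have h2 : ∑ i ∈ Ns, R.f j i ≤ supp A (R.f j) c := by
      apply Finset.sum_le_sum_of_subset_of_nonneg hNsub
      intro i _ _
      exact stv_f_nonneg hn hk R j (Nat.le_of_succ_le hj) i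
    have h3 := R.w_max (j+1) (Nat.succ_le_succ (Nat.zero_le j)) hj c
      (hcW j (Nat.le_of_succ_le hj))
    simp only [Nat.add_sub_cancel] at h3
    linarith
  -- so exactly q is removed in every round; after k rounds nothing is left
  have htot : ∀ j ≤ k, ∑ i : Fin n, R.f j i = (n:ℚ) - (j:ℚ) * quota n k := by
    intro j
    induction j with
    | zero =>
      intro _
      rw [Finset.sum_congr rfl (fun i _ => R.f_zero i)]
      simp
    | succ j ih =>
      intro hj
      have hj' : j ≤ k := Nat.le_of_succ_le hj
      have hrem := stv_removal_univ hn hk R j hj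
      rw [min_eq_right (hws j hj)] at hrem
      rw [Finset.sum_sub_distrib] at hrem
      have := ih hj'
      push_cast
      linarith
  have hfinal : ∑ i : Fin n, R.f k i = 0 := by
    rw [htot k le_rfl, quota]
    field_simp
    simp
  -- contradiction: Ns still holds at least q > 0
  have h5 : ∑ i ∈ Ns, R.f k i ≤ ∑ i : Fin n, R.f k i := by
    apply Finset.sum_le_sum_of_subset_of_nonneg (Finset.subset_univ Ns)
    intro i _ _
    exact stv_f_nonneg hn hk R k le_rfl i
  have h6 := hNsq k le_rfl
  rw [hfinal] at h5
  linarith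
end
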